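/- For every f \in \mathcal{AK}^0_H, the range f(\mathbb{D}) contains the open disk \{w \in \mathbb{C} : |w| < \sqrt{3}/(\sqrt{3}+4)\}. -/

import Mathlib

open Complex Metric ComplexConjugate

noncomputable section

/-- The real-linear map `v ↦ a v + b conj v`. -/
def Lab (a b : ℂ) : ℂ →L[ℝ] ℂ :=
  a • (ContinuousLinearMap.id ℝ ℂ) + b • (Complex.conjCLE : ℂ ≃L[ℝ] ℂ).toContinuousLinearMap

@[simp] lemma Lab_apply (a b v : ℂ) : Lab a b v = a * v + b * conj v := by
  simp [Lab]

/-- When `‖b‖ < ‖a‖`, the map `v ↦ a v + b conj v` is a real-linear equivalence. -/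
def eab (a b : ℂ) (hab : ‖b‖ < ‖a‖) : ℂ ≃L[ℝ] ℂ :=
  have hd : ((normSq a - normSq b : ℝ) : ℂ) ≠ 0 := by
    have h1 : normSq b < normSq a := by
      rw [Complex.normSq_eq_norm_sq, Complex.normSq_eq_norm_sq]
      exact pow_lt_pow_left₀ hab
        (norm_nonneg _) two_ne_zero
    exact_mod_cast (sub_pos.mpr h1).ne'
  ContinuousLinearEquiv.equivOfInverse (Lab a b)
    (Lab (conj a / ((normSq a - normSq b : ℝ) : ℂ))
         (-b / ((normSq a - normSq b : ℝ) : ℂ)))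
    (by
      intro x
      simp only [Lab_apply, map_add, map_mul, Complex.conj_conj]
      push_cast at hd ⊢
      field_simp
      linear_combination x * Complex.mul_conj a - x * Complex.mul_conj b)
    (by
      intro x
      simp only [Lab_apply, map_add, map_mul, map_div₀, map_neg, Complex.conj_conj,
        Complex.conj_ofReal]
      push_cast at hd ⊢
      field_simp
      linear_combination x * (Complex.mul_conj a - Complex.mul_conj b))

lemma eab_coe (a b : ℂ) (hab : ‖b‖ < ‖a‖) : (eab a b hab : ℂ →L[ℝ] ℂ) = Lab a b := rfl

/-- Covering theorem: the range of every `f = h + conj g ∈ 𝒜𝒦⁰_H`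
contains the open disk of radius `√3/(√3+4)` about the origin. -/
theorem AK0_covering (h g : ℂ → ℂ)
    (hh : DifferentiableOn ℂ h (ball (0:ℂ) 1))
    (hg : DifferentiableOn ℂ g (ball (0:ℂ) 1))
    (hsp : ∀ z ∈ ball (0:ℂ) 1, ‖deriv g z‖ < ‖deriv h z‖)
    (h0 : h 0 = 0) (g0 : g 0 = 0) (hd1 : deriv h 0 = 1) (gd1 : deriv g 0 = 0)
    (hconv : ∀ a ∈ ball (0:ℂ) 1, ∀ r : ℝ, 0 < r → r < 1 - ‖a‖ →
        Convex ℝ ((fun z => h z + conj (g z)) '' ball a r)) :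
    ball (0:ℂ) (Real.sqrt 3 / (Real.sqrt 3 + 4))
      ⊆ (fun z => h z + conj (g z)) '' ball (0:ℂ) 1 := by
  set f : ℂ → ℂ := fun z => h z + conj (g z) with hfdef
  intro w hw
  by_contra hw'
  set S : Set ℂ := f '' ball (0:ℂ) 1 with hSdef
  -- strict differentiability
  have hstrict : ∀ z ∈ ball (0:ℂ) 1,
      HasStrictFDerivAt f (Lab (deriv h z) (conj (deriv g z))) z := by
    intro z hz
    have hha : AnalyticAt ℂ h z := hh.analyticAt (isOpen_ball.mem_nhds hz)
    have hga : AnalyticAt ℂ g z := hg.analyticAt (isOpen_ball.mem_nhds hz)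
    have h1 : HasStrictFDerivAt h (fderiv ℂ h z) z := hha.hasStrictFDerivAt
    have h2 : HasStrictFDerivAt g (fderiv ℂ g z) z := hga.hasStrictFDerivAt
    have h3 := ((Complex.conjCLE : ℂ ≃L[ℝ] ℂ).toContinuousLinearMap.hasStrictFDerivAt).comp z
      (h2.restrictScalars ℝ)
    have h4 := (h1.restrictScalars ℝ).add h3
    have hfd : ∀ (F : ℂ → ℂ) (v : ℂ), DifferentiableAt ℂ F z → fderiv ℂ F z v = v * deriv F z := by
      intro F v _
      calc fderiv ℂ F z v = fderiv ℂ F z (v • 1) := by rw [smul_eq_mul, mul_one]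
        _ = v • fderiv ℂ F z 1 := by rw [map_smul]
        _ = v * deriv F z := by rw [fderiv_apply_one_eq_deriv, smul_eq_mul]
    convert h4 using 1
    · rfl
    · rfl
    · rfl
    ext v
    simp only [Lab_apply, ContinuousLinearMap.add_apply, ContinuousLinearMap.coe_comp',
      Function.comp_apply, ContinuousLinearMap.coe_restrictScalars',
      ContinuousLinearEquiv.coe_coe]
    rw [hfd h v (hha.differentiableAt), hfd g v (hga.differentiableAt)]
    simp [map_mul, mul_comm]
  have hmapsnhds : ∀ z ∈ ball (0:ℂ) 1, Filter.map f (nhds z) = nhds (f z) := by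
    intro z hz
    have hlt : ‖conj (deriv g z)‖ < ‖deriv h z‖ := by
      simpa using hsp z hz
    exact HasStrictFDerivAt.map_nhds_eq_of_equiv
      (f' := eab (deriv h z) (conj (deriv g z)) hlt) (hstrict z hz)
  have hSopen : IsOpen S := by
    rw [isOpen_iff_mem_nhds]
    rintro _ ⟨z, hz, rfl⟩
    rw [← hmapsnhds z hz, Filter.mem_map]
    exact Filter.mem_of_superset (isOpen_ball.mem_nhds hz) (Set.subset_preimage_image f _)
  have hSconv : Convex ℝ S := by
    intro x hx y hy s t hs ht hst
    obtain ⟨p, hp, rfl⟩ := hx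
    obtain ⟨q, hq, rfl⟩ := hy
    rw [mem_ball_zero_iff] at hp hq
    set r : ℝ := (max ‖p‖ ‖q‖ + 1) / 2 with hrdef
    have hmax : max ‖p‖ ‖q‖ < 1 := max_lt hp hq
    have hmax0 : 0 ≤ max ‖p‖ ‖q‖ := le_max_of_le_left (norm_nonneg p)
    have hr0 : 0 < r := by rw [hrdef]; linarith
    have hr1 : r < 1 := by rw [hrdef]; linarith
    have hpr : p ∈ ball (0:ℂ) r := by
      rw [mem_ball_zero_iff, hrdef]
      have := le_max_left ‖p‖ ‖q‖; linarith
    have hqr : q ∈ ball (0:ℂ) r := by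
      rw [mem_ball_zero_iff, hrdef]
      have := le_max_right ‖p‖ ‖q‖; linarith
    have hc := hconv 0 (mem_ball_self one_pos) r hr0 (by simpa using hr1)
    have hmem := hc (Set.mem_image_of_mem f hpr) (Set.mem_image_of_mem f hqr) hs ht hst
    exact Set.image_mono (ball_subset_ball hr1.le) hmem
  -- separation
  obtain ⟨ℓ, hℓ⟩ := geometric_hahn_banach_open_point hSconv hSopen hw'
  have hf0 : f 0 = 0 := by simp [hfdef, h0, g0]
  have h0S : (0:ℂ) ∈ S := ⟨0, mem_ball_self one_pos, hf0⟩
  have hm : 0 < ℓ w := by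
    have := hℓ 0 h0S; rwa [map_zero] at this
  set c : ℂ := ((ℓ 1 : ℝ) : ℂ) - ((ℓ I : ℝ) : ℂ) * I with hcdef
  have hcre : ∀ u : ℂ, ℓ u = (c * u).re := by
    intro u
    have hu : u = u.re • (1:ℂ) + u.im • I := by
      simp [Complex.real_smul, Complex.re_add_im]
    rw [hu, map_add, map_smul, map_smul]
    simp only [smul_eq_mul, hcdef]
    simp [Complex.mul_re]
    ring
  set ψ : ℂ → ℂ := fun z => c * h z + conj c * g z with hψdef
  have hψre : ∀ z, (ψ z).re = ℓ (f z) := by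
    intro z
    rw [hcre]
    have h1 : c * f z = c * h z + c * conj (g z) := by rw [hfdef]; ring
    have h2 : conj (c * conj (g z)) = conj c * g z := by
      rw [map_mul, Complex.conj_conj]
    rw [h1]
    simp only [hψdef, Complex.add_re]
    congr 1
    rw [← h2, Complex.conj_re]
  set M : ℝ := ℓ w with hMdef
  have hψlt : ∀ z ∈ ball (0:ℂ) 1, (ψ z).re < M := by
    intro z hz
    rw [hψre z]
    exact hℓ (f z) ⟨z, hz, rfl⟩
  have hψd : DifferentiableOn ℂ ψ (ball (0:ℂ) 1) := fun z hz =>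
    ((differentiableWithinAt_const c).mul (hh z hz)).add
      ((differentiableWithinAt_const (conj c)).mul (hg z hz))
  have hψ0 : ψ 0 = 0 := by simp [hψdef, h0, g0]
  have hden_ne : ∀ z ∈ ball (0:ℂ) 1, ((2*M : ℝ) : ℂ) - ψ z ≠ 0 := by
    intro z hz hzero
    have h1 : (((2*M : ℝ) : ℂ) - ψ z).re = 0 := by rw [hzero]; simp
    simp only [Complex.sub_re, Complex.ofReal_re] at h1
    have := hψlt z hz
    linarith
  set F : ℂ → ℂ := fun z => ψ z / (((2*M : ℝ) : ℂ) - ψ z) with hFdef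
  have hF0 : F 0 = 0 := by simp [hFdef, hψ0]
  have hFd : DifferentiableOn ℂ F (ball (0:ℂ) 1) := fun z hz =>
    (hψd z hz).div ((differentiableWithinAt_const _).sub (hψd z hz)) (hden_ne z hz)
  have hFmaps : Set.MapsTo F (ball (0:ℂ) 1) (ball (F 0) 1) := by
    intro z hz
    rw [hF0, mem_ball_zero_iff, hFdef]
    have hns : normSq (ψ z) < normSq (((2*M : ℝ) : ℂ) - ψ z) := by
      have h1 := hψlt z hz
      simp only [Complex.normSq_apply, Complex.sub_re, Complex.sub_im, Complex.ofReal_re,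
        Complex.ofReal_im]
      nlinarith [hm]
    have hlt : ‖ψ z‖ < ‖((2*M : ℝ) : ℂ) - ψ z‖ := by
      have := Real.sqrt_lt_sqrt (normSq_nonneg _) hns
      simpa [Complex.norm_def] using this
    rw [norm_div]
    rw [div_lt_one (lt_of_le_of_lt (norm_nonneg _) hlt)]
    exact hlt
  have hschwarz : ‖deriv F 0‖ ≤ 1 / 1 :=
    Complex.norm_deriv_le_div_of_mapsTo_ball hFd (hFmaps.mono_right ball_subset_closedBall) one_pos
  -- compute deriv F 0
  have h0b : (0:ℂ) ∈ ball (0:ℂ) 1 := mem_ball_self one_pos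
  have hhd : HasDerivAt h 1 0 := by
    have := (hh.differentiableAt (isOpen_ball.mem_nhds h0b)).hasDerivAt
    rwa [hd1] at this
  have hgd : HasDerivAt g 0 0 := by
    have := (hg.differentiableAt (isOpen_ball.mem_nhds h0b)).hasDerivAt
    rwa [gd1] at this
  have hψd0 : HasDerivAt ψ c 0 := by
    have := (hhd.const_mul c).add (hgd.const_mul (conj c))
    simp only [mul_one, mul_zero, add_zero] at this
    exact this
  have hdend : HasDerivAt (fun z => ((2*M : ℝ) : ℂ) - ψ z) (-c) 0 := hψd0.const_sub _
  have hFD : HasDerivAt F ((c * (((2*M : ℝ) : ℂ) - ψ 0) - ψ 0 * (-c)) /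
      (((2*M : ℝ) : ℂ) - ψ 0) ^ 2) 0 := hψd0.div hdend (hden_ne 0 h0b)
  have hden0 : ((2*M : ℝ) : ℂ) - ψ 0 = ((2*M : ℝ) : ℂ) := by rw [hψ0, sub_zero]
  have hM0 : ((2*M : ℝ) : ℂ) ≠ 0 := by
    simp only [ne_eq, Complex.ofReal_eq_zero]
    linarith
  have hderivF : deriv F 0 = c / ((2*M : ℝ) : ℂ) := by
    rw [hFD.deriv, hψ0]
    rw [sub_zero, zero_mul, sub_zero]
    rw [sq, mul_div_assoc]
    field_simp
  have hcnorm : ‖c‖ ≤ 2 * M := by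
    rw [hderivF] at hschwarz
    rw [norm_div] at hschwarz
    have hn : ‖((2*M : ℝ) : ℂ)‖ = 2 * M := by
      rw [Complex.norm_real, Real.norm_of_nonneg (by linarith)]
    rw [hn, div_le_iff₀ (by linarith)] at hschwarz
    linarith [hschwarz]
  have hMle : M ≤ ‖c‖ * ‖w‖ := by
    have h1 : M = (c * w).re := by rw [hMdef, hcre]
    have h2 : (c * w).re ≤ ‖c * w‖ := Complex.re_le_norm (c * w)
    rw [norm_mul] at h2
    linarith [h1 ▸ h2]
  have hc0 : 0 < ‖c‖ := by
    rcases eq_or_lt_of_le (norm_nonneg c) with hc | hc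
    · exfalso
      have : c = 0 := by rwa [eq_comm, norm_eq_zero] at hc
      rw [hMdef, hcre, this, zero_mul] at hm
      simp at hm
    · exact hc
  have hw2 : (1:ℝ) ≤ 2 * ‖w‖ := by
    have : ‖c‖ ≤ 2 * (‖c‖ * ‖w‖) := by linarith
    nlinarith
  -- final numeric contradiction
  rw [mem_ball_zero_iff] at hw
  have h3lt : Real.sqrt 3 < 4 := by
    nlinarith [Real.sq_sqrt (show (0:ℝ) ≤ 3 by norm_num), Real.sqrt_nonneg 3]
  have hpos : 0 < Real.sqrt 3 + 4 := by positivity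
  have hhalf : Real.sqrt 3 / (Real.sqrt 3 + 4) < 1 / 2 := by
    rw [div_lt_div_iff₀ hpos (by norm_num)]
    nlinarith
  linarith
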